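/- arXiv:1801.00399 — 4 statements merged into one kernel-verified Lean document; each statement's English description precedes it below -/
import Mathlib

section
/- Every n×n matrix B with entries in {0,1} satisfies |det B| ≤ 2^{-n} (n+1)^{(n+1)/2}. -/
open Matrix Finset

private lemma amgm {ι : Type*} [Fintype ι] [Nonempty ι] (z : ι → ℝ) (hz : ∀ i, 0 ≤ z i) :
    ∏ i, z i ≤ ((∑ i, z i) / (Fintype.card ι : ℝ)) ^ Fintype.card ι := by
  set m : ℕ := Fintype.card ι with hm
  have hm0 : (0:ℝ) < m := by
    have := Fintype.card_pos (α := ι); exact_mod_cast this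
  have h := Real.geom_mean_le_arith_mean_weighted Finset.univ (fun _ => (m:ℝ)⁻¹) z
    (fun i _ => by positivity)
    (by rw [Finset.sum_const, Finset.card_univ, ← hm, nsmul_eq_mul]; exact mul_inv_cancel₀ hm0.ne')
    (fun i _ => hz i)
  have hL : ∏ i, z i ^ ((m:ℝ)⁻¹) = (∏ i, z i) ^ ((m:ℝ)⁻¹) :=
    Real.finset_prod_rpow Finset.univ z (fun i _ => hz i) _
  have hR : ∑ i, (m:ℝ)⁻¹ * z i = (∑ i, z i) / m := by
    rw [← Finset.mul_sum]; ring
  rw [hL, hR] at h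
  have hprod : (0:ℝ) ≤ ∏ i, z i := Finset.prod_nonneg fun i _ => hz i
  have h2 := pow_le_pow_left₀ (Real.rpow_nonneg hprod _) h m
  rwa [← Real.rpow_natCast ((∏ i, z i) ^ ((m:ℝ)⁻¹)) m, ← Real.rpow_mul hprod,
    inv_mul_cancel₀ (ne_of_gt hm0), Real.rpow_one] at h2

private lemma hadamard_pm {m : Type*} [Fintype m] [DecidableEq m] (A : Matrix m m ℝ)
    (hA : ∀ i j, A i j = 1 ∨ A i j = -1) :
    |A.det| ≤ (Fintype.card m : ℝ) ^ ((Fintype.card m : ℝ) / 2) := by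
  rcases isEmpty_or_nonempty m with hE | hNE
  · simp [Matrix.det_isEmpty]
  set c : ℕ := Fintype.card m with hc
  have hc0 : (0:ℝ) < c := by
    have := Fintype.card_pos (α := m); exact_mod_cast this
  have hPSD : (A * Aᴴ).PosSemidef := Matrix.posSemidef_self_mul_conjTranspose A
  have hH : (A * Aᴴ).IsHermitian := hPSD.1
  have hAH : Aᴴ = Aᵀ := by ext i j; simp [Matrix.conjTranspose_apply]
  have hdet : (A * Aᴴ).det = A.det ^ 2 := by
    rw [Matrix.det_mul, hAH, Matrix.det_transpose, sq]
  have hprod : (A * Aᴴ).det = ∏ i, hH.eigenvalues i := by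
    simpa using hH.det_eq_prod_eigenvalues
  have htr : (A * Aᴴ).trace = ∑ i, hH.eigenvalues i := by
    simpa using hH.trace_eq_sum_eigenvalues
  have htrval : (A * Aᴴ).trace = (c : ℝ) * (c : ℝ) := by
    have hd : ∀ i, (A * Aᴴ) i i = (c : ℝ) := by
      intro i
      have h1 : ∀ j, A i j * (starRingEnd ℝ) (A i j) = 1 := by
        intro j; rcases hA i j with h | h <;> simp [h]
      have h2 : ∀ j, A i j * A i j = 1 := by
        intro j; rcases hA i j with h | h <;> simp [h]
      simp [Matrix.mul_apply, Matrix.conjTranspose_apply, h1, h2, hc]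
    rw [Matrix.trace]
    simp only [Matrix.diag_apply, hd]
    rw [Finset.sum_const, Finset.card_univ, nsmul_eq_mul, ← hc]
  have hnn : ∀ i, 0 ≤ hH.eigenvalues i := hPSD.eigenvalues_nonneg
  have key : A.det ^ 2 ≤ (c:ℝ) ^ c := by
    rw [← hdet, hprod]
    calc ∏ i, hH.eigenvalues i ≤ ((∑ i, hH.eigenvalues i) / c) ^ c := amgm _ hnn
      _ = (c:ℝ) ^ c := by
          rw [← htr, htrval]
          congr 1
          field_simp
  have hcd : |A.det| = Real.sqrt (A.det ^ 2) := (Real.sqrt_sq_eq_abs _).symm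
  rw [hcd]
  calc Real.sqrt (A.det ^ 2) ≤ Real.sqrt ((c:ℝ) ^ c) := Real.sqrt_le_sqrt key
    _ = (c:ℝ) ^ ((c:ℝ)/2) := by
        rw [Real.sqrt_eq_rpow, ← Real.rpow_natCast (c:ℝ) c, ← Real.rpow_mul hc0.le]
        ring_nf

/-- Every `n × n` `{0,1}`-matrix `B` satisfies `|det B| ≤ 2^{-n} (n+1)^{(n+1)/2}`. -/
theorem hadamard_bound_zero_one (n : ℕ) (B : Matrix (Fin n) (Fin n) ℝ)
    (hB : ∀ j k, B j k = 0 ∨ B j k = 1) :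
    |B.det| ≤ ((n : ℝ) + 1) ^ (((n : ℝ) + 1) / 2) / 2 ^ n := by
  set J : Matrix (Fin 1) (Fin n) ℝ := Matrix.of fun _ _ => 1 with hJ
  set K : Matrix (Fin n) (Fin 1) ℝ := Matrix.of fun _ _ => 1 with hK
  set A : Matrix (Fin 1 ⊕ Fin n) (Fin 1 ⊕ Fin n) ℝ :=
    Matrix.fromBlocks 1 0 K 1 * Matrix.fromBlocks 1 J 0 ((-2 : ℝ) • B) with hA
  have hdetA : A.det = (-2:ℝ)^n * B.det := by
    rw [hA, Matrix.det_mul, Matrix.det_fromBlocks_zero₁₂, Matrix.det_fromBlocks_zero₂₁,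
      Matrix.det_one, Matrix.det_one, Matrix.det_smul]
    simp [Fintype.card_fin]
  have hentries : ∀ i j, A i j = 1 ∨ A i j = -1 := by
    intro i j
    rw [hA, Matrix.fromBlocks_multiply]
    rcases i with i | i <;> rcases j with j | j
    · left
      obtain rfl : i = j := Subsingleton.elim i j
      simp [Matrix.fromBlocks_apply₁₁, Matrix.one_apply]
    · left; simp [Matrix.fromBlocks_apply₁₂, hJ, Matrix.mul_apply]
    · left; simp [Matrix.fromBlocks_apply₂₁, hK, Matrix.mul_apply, Matrix.one_apply]
    · have hKJ : (K * J) i j = 1 := by simp [hK, hJ, Matrix.mul_apply]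
      rcases hB i j with h | h
      · left
        simp [Matrix.fromBlocks_apply₂₂, Matrix.add_apply, hKJ, h]
      · right
        simp [Matrix.fromBlocks_apply₂₂, Matrix.add_apply, hKJ, h]
        norm_num
  have hcard : Fintype.card (Fin 1 ⊕ Fin n) = n + 1 := by
    simp [Fintype.card_sum, Nat.add_comm]
  have hbd := hadamard_pm A hentries
  rw [hcard] at hbd
  have hcast : ((n + 1 : ℕ) : ℝ) = (n : ℝ) + 1 := by push_cast; ring
  rw [hcast] at hbd
  have habs : |A.det| = 2^n * |B.det| := by
    rw [hdetA, abs_mul, abs_pow, abs_neg]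
    norm_num
  rw [habs] at hbd
  have h2 : (0:ℝ) < 2^n := by positivity
  rw [le_div_iff₀ h2]
  linarith [hbd]
end

section
/- The number of binary necklaces of length n equals (1/n) Σ_{d | n} 2^{n/d} φ(d), where φ is Euler's totient function. -/
open Finset

/-- The numerical value of a binary word of length `n`, so that comparison of values
is lexicographic comparison of words. -/
def wordVal (n : ℕ) [NeZero n] (w : ZMod n → Bool) : ℕ :=
  ∑ i : ZMod n, if w i then 2 ^ (n - 1 - i.val) else 0

section aux

variable (n : ℕ) [NeZero n]

/-- Rotation action of `ZMod n` on binary words. -/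
instance rotAction : AddAction (ZMod n) (ZMod n → Bool) where
  vadd r w := fun i => w (i + r)
  zero_vadd w := by funext i; show w (i + 0) = w i; rw [add_zero]
  add_vadd r s w := by funext i; show w (i + (r + s)) = w (i + r + s); rw [add_assoc]

omit [NeZero n] in
lemma vadd_def (r : ZMod n) (w : ZMod n → Bool) : r +ᵥ w = fun i => w (i + r) := rfl

lemma wordVal_injective : Function.Injective (wordVal n) := by
  intro w w' h
  set e : ZMod n → ℕ := fun i => n - 1 - i.val with he
  have hinj : Function.Injective e := by
    intro a b hab
    have ha := ZMod.val_lt a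
    have hb := ZMod.val_lt b
    have : a.val = b.val := by simp only [he] at hab; omega
    exact ZMod.val_injective n this
  have key : ∀ v : ZMod n → Bool, wordVal n v
      = ∑ k ∈ (univ.filter fun i => v i = true).image e, 2 ^ k := by
    intro v
    rw [Finset.sum_image (fun a _ b _ hab => hinj hab), wordVal, Finset.sum_filter]
  rw [key, key] at h
  have himg := Finset.equivBitIndices.symm.injective (by simpa using h)
  have hset := Finset.image_injective hinj himg
  funext i
  have := Finset.ext_iff.mp hset i
  simp only [Finset.mem_filter, Finset.mem_univ, true_and] at this
  cases hwi : w i <;> cases hwi' : w' i <;> simp_all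

end aux

section fixed

variable (n : ℕ) [NeZero n]

omit [NeZero n] in
lemma fixed_step (r : ZMod n) (w : ZMod n → Bool) (hw : r +ᵥ w = w) :
    ∀ (c : ℕ) (i : ZMod n), w (i + c • r) = w i := by
  intro c
  induction c with
  | zero => intro i; simp
  | succ c ih =>
    intro i
    have h1 : ∀ j, w (j + r) = w j := fun j => congrFun hw j
    have : i + (c + 1) • r = (i + c • r) + r := by
      rw [succ_nsmul]; ring
    rw [this, h1, ih]

lemma fixed_of_cast_eq (r : ZMod n) (w : ZMod n → Bool) (hw : r +ᵥ w = w)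
    {i j : ZMod n}
    (h : (ZMod.castHom (Nat.gcd_dvd_left n r.val) (ZMod (n.gcd r.val))) i
       = (ZMod.castHom (Nat.gcd_dvd_left n r.val) (ZMod (n.gcd r.val))) j) :
    w i = w j := by
  set g := n.gcd r.val with hg
  -- (g : ZMod n) is a multiple of r
  have hbez : ∃ b : ZMod n, (g : ZMod n) = b * r := by
    refine ⟨((Nat.gcdB n r.val : ℤ) : ZMod n), ?_⟩
    have h2 := congrArg (fun z : ℤ => (z : ZMod n)) (Nat.gcd_eq_gcd_ab n r.val)
    push_cast at h2
    rw [ZMod.natCast_self, zero_mul, zero_add, ZMod.natCast_val, ZMod.cast_id] at h2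
    rw [h2]; ring
  -- g divides (i - j).val
  have hdvd : g ∣ (i - j).val := by
    have h0 : (ZMod.castHom (Nat.gcd_dvd_left n r.val) (ZMod g)) (i - j) = 0 := by
      rw [map_sub, h, sub_self]
    rw [ZMod.castHom_apply, ← ZMod.natCast_val,
      ZMod.natCast_eq_zero_iff] at h0
    exact h0
  obtain ⟨k, hk⟩ := hdvd
  obtain ⟨b, hb⟩ := hbez
  have hij : i = j + (b * k) * r := by
    have h3 : ((i - j).val : ZMod n) = i - j := ZMod.natCast_rightInverse _
    have h4 : i - j = ((g * k : ℕ) : ZMod n) := by rw [← hk, h3]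
    push_cast at h4
    rw [hb] at h4
    linear_combination h4
  have := fixed_step n r w hw (b * k).val j
  rw [nsmul_eq_mul, ZMod.natCast_val, ZMod.cast_id] at this
  rw [hij, ← this]

lemma card_fixedBy (r : ZMod n) :
    Nat.card (AddAction.fixedBy (ZMod n → Bool) r) = 2 ^ (n.gcd r.val) := by
  set g := n.gcd r.val with hg
  haveI : NeZero g := ⟨by
    intro h0
    exact (NeZero.ne n) (Nat.gcd_eq_zero_iff.mp h0).1⟩
  set π := ZMod.castHom (Nat.gcd_dvd_left n r.val) (ZMod g) with hπ
  have hπr : π r = 0 := by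
    rw [ZMod.castHom_apply, ← ZMod.natCast_val, ZMod.natCast_eq_zero_iff]
    exact Nat.gcd_dvd_right n r.val
  have hπsurj : ∀ y : ZMod g, π ((y.val : ℕ) : ZMod n) = y := by
    intro y
    rw [map_natCast]
    exact ZMod.natCast_rightInverse y
  set Φ : (ZMod g → Bool) → (AddAction.fixedBy (ZMod n → Bool) r) :=
    fun f => ⟨fun i => f (π i), by
      show r +ᵥ (fun i => f (π i)) = fun i => f (π i)
      funext i
      show f (π (i + r)) = f (π i)
      rw [map_add, hπr, add_zero]⟩ with hΦ
  have hbij : Function.Bijective Φ := by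
    constructor
    · intro f f' hff
      funext y
      have := congrFun (congrArg Subtype.val hff) ((y.val : ℕ) : ZMod n)
      change f (π ((y.val : ℕ) : ZMod n)) = f' (π ((y.val : ℕ) : ZMod n)) at this
      rwa [hπsurj y] at this
    · rintro ⟨w, hw⟩
      refine ⟨fun y => w ((y.val : ℕ) : ZMod n), ?_⟩
      apply Subtype.ext
      funext i
      show w (((π i).val : ℕ) : ZMod n) = w i
      exact fixed_of_cast_eq n r w hw (by rw [hπsurj])
  rw [Nat.card_eq_of_bijective Φ hbij |>.symm] at *
  rw [Nat.card_eq_fintype_card, Fintype.card_fun, ZMod.card, Fintype.card_bool]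

end fixed

section orbits

variable (n : ℕ) [NeZero n]

lemma card_orbits :
    Nat.card (Quotient (AddAction.orbitRel (ZMod n) (ZMod n → Bool)))
      = (Finset.univ.filter fun w : ZMod n → Bool =>
          ∀ r : ZMod n, wordVal n w ≤ wordVal n fun i => w (i + r)).card := by
  classical
  set P : (ZMod n → Bool) → Prop :=
    fun w => ∀ r : ZMod n, wordVal n w ≤ wordVal n fun i => w (i + r) with hP
  have hPvadd : ∀ w, P w ↔ ∀ r : ZMod n, wordVal n w ≤ wordVal n (r +ᵥ w) := by
    intro w; rfl
  set Φ : {w : ZMod n → Bool // P w} → Quotient (AddAction.orbitRel (ZMod n) (ZMod n → Bool)) :=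
    fun w => ⟦w.1⟧ with hΦ
  have hbij : Function.Bijective Φ := by
    constructor
    · rintro ⟨w, hw⟩ ⟨w', hw'⟩ hww
      have hrel : w ∈ AddAction.orbit (ZMod n) w' := Quotient.exact hww
      obtain ⟨r, hr⟩ := hrel
      have hr : r +ᵥ w' = w := hr
      have h1 : wordVal n w' ≤ wordVal n w := by
        have := (hPvadd w').mp hw' r
        rwa [hr] at this
      have h2 : wordVal n w ≤ wordVal n w' := by
        have hr' : (-r) +ᵥ w = w' := by rw [← hr, ← add_vadd]; simp
        have := (hPvadd w).mp hw (-r)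
        rwa [hr'] at this
      exact Subtype.ext (wordVal_injective n (le_antisymm h2 h1))
    · intro q
      obtain ⟨w0, rfl⟩ := q.exists_rep
      obtain ⟨r₀, -, hr₀⟩ := Finset.exists_min_image Finset.univ
        (fun r : ZMod n => wordVal n (r +ᵥ w0)) ⟨0, Finset.mem_univ 0⟩
      refine ⟨⟨r₀ +ᵥ w0, ?_⟩, ?_⟩
      · rw [hPvadd]
        intro s
        have : s +ᵥ (r₀ +ᵥ w0) = (s + r₀) +ᵥ w0 := (add_vadd s r₀ w0).symm
        rw [this]
        exact hr₀ (s + r₀) (Finset.mem_univ _)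
      · exact Quotient.sound ⟨r₀, rfl⟩
  rw [← Nat.card_eq_of_bijective Φ hbij, Nat.card_eq_fintype_card,
    Fintype.card_subtype]

lemma sum_gcd_pow :
    ∑ r : ZMod n, 2 ^ (n.gcd r.val) = ∑ d ∈ n.divisors, 2 ^ (n / d) * Nat.totient d := by
  classical
  have h1 : ∑ r : ZMod n, 2 ^ (n.gcd r.val) = ∑ k ∈ Finset.range n, 2 ^ (n.gcd k) := by
    refine Finset.sum_nbij' (fun r => r.val) (fun k => (k : ZMod n)) ?_ ?_ ?_ ?_ ?_
    · intro a _; exact Finset.mem_range.mpr (ZMod.val_lt a)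
    · intro a _; exact Finset.mem_univ _
    · intro a _; exact ZMod.natCast_rightInverse a
    · intro a ha; exact ZMod.val_cast_of_lt (Finset.mem_range.mp ha)
    · intro a _; rfl
  rw [h1]
  have h2 : ∀ k ∈ Finset.range n, n.gcd k ∈ n.divisors := by
    intro k _
    exact Nat.mem_divisors.mpr ⟨Nat.gcd_dvd_left n k, NeZero.ne n⟩
  rw [← Finset.sum_fiberwise_of_maps_to h2 (fun k => 2 ^ (n.gcd k)),
    ← Nat.sum_div_divisors n (fun d => 2 ^ (n / d) * Nat.totient d)]
  refine Finset.sum_congr rfl ?_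
  intro d hd
  have hdvd : d ∣ n := Nat.dvd_of_mem_divisors hd
  have h3 : ∑ k ∈ Finset.filter (fun k => n.gcd k = d) (Finset.range n), 2 ^ (n.gcd k)
      = (Finset.filter (fun k => n.gcd k = d) (Finset.range n)).card * 2 ^ d := by
    rw [Finset.sum_congr rfl (fun k hk => by rw [(Finset.mem_filter.mp hk).2]),
      Finset.sum_const, smul_eq_mul]
  rw [h3, ← Nat.totient_div_of_dvd hdvd, Nat.div_div_self hdvd (NeZero.ne n), mul_comm]

end orbits

/-- The number of binary necklaces of length `n` (counted as words in `{0,1}^n` that are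
lexicographically minimal among all their cyclic rotations) equals
`(1/n) ∑_{d ∣ n} 2^{n/d} φ(d)`. -/
theorem card_necklaces (n : ℕ) [NeZero n] :
    ((Finset.univ.filter fun w : ZMod n → Bool =>
        ∀ r : ZMod n, wordVal n w ≤ wordVal n fun i => w (i + r)).card : ℚ)
      = (1 / (n : ℚ)) * ∑ d ∈ n.divisors, (2 : ℚ) ^ (n / d) * (Nat.totient d) := by
  classical
  haveI : Fintype (Quotient (AddAction.orbitRel (ZMod n) (ZMod n → Bool))) :=
    Fintype.ofFinite _
  haveI : ∀ a : ZMod n, Fintype (AddAction.fixedBy (ZMod n → Bool) a) :=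
    fun a => Fintype.ofFinite _
  have key := AddAction.sum_card_fixedBy_eq_card_orbits_mul_card_addGroup
    (ZMod n) (ZMod n → Bool)
  simp only [Fintype.card_eq_nat_card] at key
  rw [Nat.card_zmod, card_orbits n] at key
  have hfix : ∀ a : ZMod n, Nat.card (AddAction.fixedBy (ZMod n → Bool) a)
      = 2 ^ (n.gcd a.val) := card_fixedBy n
  rw [Finset.sum_congr rfl (fun a _ => hfix a), sum_gcd_pow n] at key
  -- key : ∑ d ∈ n.divisors, 2 ^ (n / d) * d.totient = card * n
  have hn : (n : ℚ) ≠ 0 := Nat.cast_ne_zero.mpr (NeZero.ne n)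
  have hq := congrArg (fun m : ℕ => (m : ℚ)) key
  push_cast at hq
  field_simp
  linarith [hq]
end

section
/- Let n = 4k+1 be an odd prime, let χ be the Legendre symbol modulo n, and let A_n(x) = circ(x, (1+χ(1))/2, (1+χ(2))/2, ..., (1+χ(n-1))/2). Then det A_n(x) = (x + 2k)(x^2 − x − k)^{2k} as a polynomial in x. -/
open Matrix Polynomial

lemma aux_sub_dvd {R A : Type*} [CommRing R] [Ring A] [Algebra R A]
    (b : A) (r : R) (p : R[X]) :
    (algebraMap R A r - b) ∣ algebraMap R A (p.eval r) - aeval b p := by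
  induction p using Polynomial.induction_on' with
  | add f g hf hg =>
      have h := dvd_add hf hg
      convert h using 1
      simp only [eval_add, map_add]
      abel
  | monomial i c =>
      have hc : Commute (algebraMap R A r) b := Algebra.commutes r b
      obtain ⟨e, he⟩ := hc.sub_dvd_pow_sub_pow i
      refine ⟨algebraMap R A c * e, ?_⟩
      rw [eval_monomial, aeval_monomial, _root_.map_mul, _root_.map_pow]
      calc algebraMap R A c * algebraMap R A r ^ i - algebraMap R A c * b ^ i
          = algebraMap R A c * (algebraMap R A r ^ i - b ^ i) := by rw [mul_sub]
        _ = algebraMap R A c * ((algebraMap R A r - b) * e) := by rw [← he]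
        _ = (algebraMap R A r - b) * (algebraMap R A c * e) := by
            rw [← mul_assoc, Algebra.commutes c (algebraMap R A r - b), mul_assoc]

lemma charpoly_dvd_pow_of_aeval_eq_zero {R : Type*} [CommRing R] {ι : Type*}
    [Fintype ι] [DecidableEq ι] (N : Matrix ι ι R) (q : R[X])
    (h : aeval N q = 0) : N.charpoly ∣ q ^ Fintype.card ι := by
  have key := aux_sub_dvd (A := Matrix ι ι R[X]) (N.map (C : R →+* R[X])) (X : R[X]) (q.map (C : R →+* R[X]))
  have h1 : (q.map (C : R →+* R[X])).eval X = q := by rw [eval_map, eval₂_C_X]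
  have h2 : aeval (N.map (C : R →+* R[X])) (q.map (C : R →+* R[X])) = 0 := by
    have hmc : q.map (C : R →+* R[X]) = q.map (algebraMap R R[X]) := rfl
    rw [hmc, aeval_map_algebraMap]
    have hN : N.map (C : R →+* R[X]) = (Algebra.ofId R R[X]).mapMatrix N := by
      ext i j; simp [Algebra.ofId_apply, algebraMap_eq]
    rw [hN, aeval_algHom_apply, h, map_zero]
  rw [h1, h2, sub_zero] at key
  have h3 : algebraMap R[X] (Matrix ι ι R[X]) X - N.map (C : R →+* R[X]) = charmatrix N := by
    ext i j
    rcases eq_or_ne i j with rfl | hij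
    · simp [charmatrix_apply_eq, Matrix.algebraMap_matrix_apply, Matrix.map_apply]
    · simp [charmatrix_apply_ne _ _ _ hij, Matrix.algebraMap_matrix_apply, hij, Matrix.map_apply]
  rw [h3] at key
  obtain ⟨H, hH⟩ := key
  refine ⟨H.det, ?_⟩
  have hd := congrArg Matrix.det hH
  rw [det_mul, Matrix.algebraMap_eq_diagonal, det_diagonal] at hd
  simp only [Pi.algebraMap_apply, Algebra.algebraMap_self, RingHom.id_apply, Finset.prod_const,
    Finset.card_univ] at hd
  exact hd

lemma char_sum_shift {F : Type*} [Field F] [Fintype F] [DecidableEq F] (χ : F → ℚ)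
    (h0 : χ 0 = 0) (h1 : χ 1 = 1) (hmul : ∀ x y, χ (x * y) = χ x * χ y)
    (hsq : ∀ x, x ≠ 0 → χ x * χ x = 1) (hsum : ∑ a : F, χ a = 0)
    {c : F} (hc : c ≠ 0) :
    ∑ a : F, χ a * χ (a - c) = -1 := by
  have h00 : χ 0 * χ (0 - c) = 0 := by rw [h0, zero_mul]
  rw [← Finset.sum_erase (f := fun a => χ a * χ (a - c)) (a := (0:F)) Finset.univ h00]
  have step : ∀ a ∈ Finset.univ.erase (0 : F), χ a * χ (a - c) = χ (1 - c * a⁻¹) := by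
    intro a ha
    have ha0 : a ≠ 0 := (Finset.mem_erase.mp ha).1
    have hfac : a - c = a * (1 - c * a⁻¹) := by field_simp
    rw [hfac, hmul, ← mul_assoc, hsq a ha0, one_mul]
  rw [Finset.sum_congr rfl step]
  have hbij : ∑ a ∈ Finset.univ.erase (0 : F), χ (1 - c * a⁻¹)
      = ∑ b ∈ Finset.univ.erase (1 : F), χ b := by
    apply Finset.sum_nbij' (i := fun a => 1 - c * a⁻¹) (j := fun b => c * (1 - b)⁻¹)
    · intro a ha
      have ha0 : a ≠ 0 := (Finset.mem_erase.mp ha).1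
      simp only [Finset.mem_erase, Finset.mem_univ, and_true]
      intro hcon
      apply hc
      have : c * a⁻¹ = 0 := by linear_combination -hcon
      rcases mul_eq_zero.mp this with h | h
      · exact h
      · exact absurd (inv_eq_zero.mp h) ha0
    · intro b hb
      have hb1 : b ≠ 1 := (Finset.mem_erase.mp hb).1
      simp only [Finset.mem_erase, Finset.mem_univ, and_true]
      exact mul_ne_zero hc (inv_ne_zero (sub_ne_zero.mpr (Ne.symm hb1)))
    · intro a ha
      have ha0 : a ≠ 0 := (Finset.mem_erase.mp ha).1
      field_simp
      rw [sub_sub_cancel, div_self hc]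
    · intro b hb
      have hb1 : b ≠ 1 := (Finset.mem_erase.mp hb).1
      have : (1 : F) - b ≠ 0 := sub_ne_zero.mpr (Ne.symm hb1)
      field_simp
      rw [sub_sub_cancel]
    · intro a ha; rfl
  rw [hbij, Finset.sum_erase_eq_sub (Finset.mem_univ (1 : F)), hsum, h1]
  norm_num

/-- For `n = 4k+1` an odd prime and `χ` the Legendre symbol mod `n`, the circulant
`A_n(x) = circ(x, (1+χ(1))/2, ..., (1+χ(n-1))/2)` satisfies
`det A_n(x) = (x + 2k)(x² − x − k)^{2k}` as a polynomial in `x`. -/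
theorem det_legendre_circulant (k : ℕ) (hk : 0 < k) (hp : (4 * k + 1).Prime) :
    (Matrix.of fun p q : ZMod (4 * k + 1) =>
        (fun m : ZMod (4 * k + 1) =>
            if m = 0 then (Polynomial.X : Polynomial ℚ)
            else Polynomial.C ((1 + (@legendreSym (4 * k + 1) ⟨hp⟩ m.val : ℚ)) / 2)) (q - p)).det
      = (Polynomial.X + Polynomial.C ((2 * k : ℕ) : ℚ)) *
          (Polynomial.X ^ 2 - Polynomial.X - Polynomial.C ((k : ℕ) : ℚ)) ^ (2 * k) := by
  haveI : Fact (Nat.Prime (4 * k + 1)) := ⟨hp⟩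
  set F := ZMod (4 * k + 1) with hF
  set χ : F → ℚ := fun m => ((quadraticChar F m : ℤ) : ℚ) with hχdef
  have hn2 : ringChar F ≠ 2 := by
    rw [ZMod.ringChar_zmod_n]; omega
  have hχ0 : χ 0 = 0 := by simp [hχdef, quadraticChar_zero]
  have hχ1 : χ 1 = 1 := by simp [hχdef]
  have hχmul : ∀ x y : F, χ (x * y) = χ x * χ y := by
    intro x y
    show ((quadraticChar F (x * y) : ℤ) : ℚ) = ((quadraticChar F x : ℤ) : ℚ) * ((quadraticChar F y : ℤ) : ℚ)
    rw [_root_.map_mul]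
    push_cast
    ring
  have hχsq : ∀ x : F, x ≠ 0 → χ x * χ x = 1 := by
    intro x hx
    have h := quadraticChar_sq_one hx
    show ((quadraticChar F x : ℤ) : ℚ) * ((quadraticChar F x : ℤ) : ℚ) = 1
    rw [← Int.cast_mul, ← sq, h, Int.cast_one]
  have hχsum : ∑ a : F, χ a = 0 := by
    have h := quadraticChar_sum_zero hn2
    have : ∑ a : F, χ a = (((∑ a : F, quadraticChar F a : ℤ)) : ℚ) := by push_cast; rfl
    rw [this]
    exact_mod_cast congrArg (fun z : ℤ => (z : ℚ)) h
  have hχneg : ∀ x : F, χ (-x) = χ x := by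
    intro x
    have hm1 : quadraticChar F (-1) = 1 := by
      rw [quadraticChar_neg_one hn2]
      have : Fintype.card F = 4 * k + 1 := ZMod.card _
      rw [this]
      exact ZMod.χ₄_nat_one_mod_four (by omega)
    have : (-x) = (-1) * x := by ring
    rw [this, hχmul]
    have : χ (-1) = 1 := by rw [hχdef]; simp only []; rw [hm1]; norm_num
    rw [this, one_mul]
  have hsum : ∀ c : F, (∑ a : F, χ a * χ (a - c))
      = if c = 0 then ((4 * k + 1 : ℕ) : ℚ) - 1 else -1 := by
    intro c
    by_cases hc : c = 0
    · subst hc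
      simp only [sub_zero, if_true]
      have hterm : ∀ a : F, χ a * χ a = if a = 0 then 0 else 1 := by
        intro a
        by_cases ha : a = 0
        · simp [ha, hχ0]
        · simp [ha, hχsq a ha]
      rw [Finset.sum_congr rfl fun a _ => hterm a]
      have : ∀ a : F, (if a = 0 then (0:ℚ) else 1) = 1 - (if a = 0 then (1:ℚ) else 0) := by
        intro a; split <;> norm_num
      rw [Finset.sum_congr rfl fun a _ => this a, Finset.sum_sub_distrib,
        Finset.sum_const, Finset.card_univ, Finset.sum_ite_eq' Finset.univ (0 : F) fun _ => (1:ℚ)]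
      rw [show Fintype.card F = 4 * k + 1 from ZMod.card _]
      simp
    · rw [if_neg hc]
      exact char_sum_shift χ hχ0 hχ1 hχmul hχsq hχsum hc
  -- matrices
  set J : Matrix F F ℚ := Matrix.of (fun _ _ => (1:ℚ)) with hJdef
  set Q : Matrix F F ℚ := Matrix.of (fun p q => χ (q - p)) with hQdef
  set N : Matrix F F ℚ := Matrix.of (fun p q => if q - p = 0 then 0 else -((1 + χ (q - p)) / 2)) with hNdef
  -- LHS is the charpoly of N
  have hLHS : (Matrix.of fun p q : ZMod (4 * k + 1) =>
        (fun m : ZMod (4 * k + 1) =>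
            if m = 0 then (Polynomial.X : Polynomial ℚ)
            else Polynomial.C ((1 + (@legendreSym (4 * k + 1) ⟨hp⟩ m.val : ℚ)) / 2)) (q - p)).det
      = N.charpoly := by
    have hmat : (Matrix.of fun p q : ZMod (4 * k + 1) =>
        (fun m : ZMod (4 * k + 1) =>
            if m = 0 then (Polynomial.X : Polynomial ℚ)
            else Polynomial.C ((1 + (@legendreSym (4 * k + 1) ⟨hp⟩ m.val : ℚ)) / 2)) (q - p))
        = charmatrix N := by
      ext p q
      by_cases h : q - p = 0
      · have hpq : p = q := (sub_eq_zero.mp h).symm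
        subst hpq
        rw [charmatrix_apply_eq]
        simp [hNdef, Matrix.of_apply, h]
      · have hpq : p ≠ q := fun e => h (by rw [e, sub_self])
        have hcast : (((q - p).val : ℕ) : F) = q - p := by
          rw [ZMod.natCast_val, ZMod.cast_id]
        have hleg : (legendreSym (4 * k + 1) ((q - p).val) : ℚ) = χ (q - p) := by
          show ((quadraticChar F (((((q - p).val : ℕ) : ℤ)) : F) : ℤ) : ℚ) = χ (q - p)
          rw [Int.cast_natCast, hcast]
        rw [charmatrix_apply_ne _ _ _ hpq, hNdef]
        simp only [Matrix.of_apply, if_neg h]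
        rw [hleg, map_neg, neg_neg]
    rw [hmat]
    rfl
  -- entrywise identities
  have hJJ : J * J = ((4 * k + 1 : ℕ) : ℚ) • J := by
    ext p q
    rw [Matrix.mul_apply]
    simp only [hJdef, Matrix.of_apply, mul_one, Finset.sum_const, Finset.card_univ,
      smul_eq_mul, Matrix.smul_apply, nsmul_eq_mul]
    rw [show Fintype.card F = 4 * k + 1 from ZMod.card _]
  have hQJ : Q * J = 0 := by
    ext p q
    simp only [Matrix.mul_apply, hQdef, hJdef, Matrix.of_apply, mul_one, Matrix.zero_apply]
    rw [Fintype.sum_equiv (Equiv.subRight p) (fun r => χ (r - p)) χ (fun r => rfl)]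
    exact hχsum
  have hJQ : J * Q = 0 := by
    ext p q
    simp only [Matrix.mul_apply, hQdef, hJdef, Matrix.of_apply, one_mul, Matrix.zero_apply]
    rw [Fintype.sum_equiv (Equiv.subLeft q) (fun r => χ (q - r)) χ (fun r => rfl)]
    exact hχsum
  have hQQ : Q * Q = ((4 * k + 1 : ℕ) : ℚ) • 1 - J := by
    ext p q
    simp only [Matrix.mul_apply, hQdef, Matrix.of_apply, Matrix.sub_apply, Matrix.smul_apply,
      Matrix.one_apply, hJdef, smul_eq_mul]
    have hre : ∑ r : F, χ (r - p) * χ (q - r) = ∑ a : F, χ a * χ (a - (q - p)) := by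
      refine Fintype.sum_equiv (Equiv.subRight p) _ _ (fun r => ?_)
      have h1 : (Equiv.subRight p r) = r - p := rfl
      rw [h1]
      congr 1
      rw [← hχneg (r - p - (q - p))]
      congr 1
      ring
    rw [hre, hsum (q - p)]
    by_cases hpq : p = q
    · subst hpq; simp
    · rw [if_neg (fun hcon => hpq (by linear_combination -hcon)), if_neg hpq]
      ring
  -- N in terms of J and Q
  have hNval : N = (1/2 : ℚ) • ((1 : Matrix F F ℚ) - J - Q) := by
    ext p q
    simp only [hNdef, Matrix.of_apply, Matrix.smul_apply, Matrix.sub_apply, Matrix.one_apply,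
      hJdef, hQdef, smul_eq_mul]
    by_cases h : q - p = 0
    · have hpq : p = q := (sub_eq_zero.mp h).symm
      subst hpq
      rw [if_pos h, if_pos rfl, h, hχ0]
      ring
    · have hpq : p ≠ q := fun e => h (by rw [e, sub_self])
      rw [if_neg h, if_neg hpq]
      ring
  -- annihilating identity
  have hPJ : ((1 : Matrix F F ℚ) - J - Q) * J = (1 - ((4 * k + 1 : ℕ) : ℚ)) • J := by
    rw [sub_mul, sub_mul, one_mul, hJJ, hQJ]
    module
  have hPP : ((1 : Matrix F F ℚ) - J - Q) * ((1 : Matrix F F ℚ) - J - Q)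
      = (((4 * k + 1 : ℕ) : ℚ) + 1) • (1 : Matrix F F ℚ)
        + (((4 * k + 1 : ℕ) : ℚ) - 3) • J - (2 : ℚ) • Q := by
    have expand : ((1 : Matrix F F ℚ) - J - Q) * ((1 : Matrix F F ℚ) - J - Q)
        = 1 - J - Q - (J - J * J - Q * J) - (Q - J * Q - Q * Q) := by
      simp only [sub_mul, mul_sub, one_mul, mul_one]
    rw [expand, hJJ, hQJ, hJQ, hQQ]
    module
  have hS : N * N - N - ((k : ℕ) : ℚ) • 1 = ((k : ℕ) : ℚ) • J := by
    rw [hNval, smul_mul_assoc, mul_smul_comm, hPP]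
    push_cast
    module
  have hann : (N + ((2 * k : ℕ) : ℚ) • 1) * (N * N - N - ((k : ℕ) : ℚ) • 1) = 0 := by
    rw [hS, hNval, add_mul, smul_mul_assoc, mul_smul_comm, hPJ, smul_mul_assoc, one_mul]
    push_cast
    module
  -- aeval
  have hq0 : aeval N ((X + C ((2 * k : ℕ) : ℚ)) * (X ^ 2 - X - C ((k : ℕ) : ℚ))) = 0 := by
    rw [_root_.map_mul, _root_.map_add, _root_.map_sub, _root_.map_sub, _root_.map_pow,
      aeval_X, aeval_C, aeval_C,
      Algebra.algebraMap_eq_smul_one, Algebra.algebraMap_eq_smul_one, sq]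
    exact hann
  have hdvd : N.charpoly ∣ ((X + C ((2 * k : ℕ) : ℚ)) * (X ^ 2 - X - C ((k : ℕ) : ℚ))) ^ (4 * k + 1) := by
    have h := charpoly_dvd_pow_of_aeval_eq_zero N _ hq0
    rwa [show Fintype.card F = 4 * k + 1 from ZMod.card _] at h
  -- factorization
  set q₁ : ℚ[X] := X + C ((2 * k : ℕ) : ℚ) with hq₁
  set q₂ : ℚ[X] := X ^ 2 - X - C ((k : ℕ) : ℚ) with hq₂
  have hm1 : q₁.Monic := monic_X_add_C _
  have hd1 : q₁.natDegree = 1 := natDegree_X_add_C _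
  have hm2 : q₂.Monic := by
    have : q₂ = X ^ (1 + 1) - (X + C ((k : ℕ) : ℚ)) := by rw [hq₂]; ring
    rw [this]
    exact monic_X_pow_sub (by rw [degree_X_add_C]; norm_num)
  have hd2 : q₂.natDegree = 2 := by
    rw [hq₂]
    compute_degree!
  have hirr1 : Irreducible q₁ := by
    have h := irreducible_X_sub_C (-((2 * k : ℕ) : ℚ))
    rw [map_neg, sub_neg_eq_add] at h
    exact h
  have hirr2 : Irreducible q₂ := by
    rw [irreducible_iff_roots_eq_zero_of_degree_le_three (by rw [hd2]) (by rw [hd2]; norm_num)]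
    by_contra hroots
    obtain ⟨r, hr⟩ := Multiset.exists_mem_of_ne_zero hroots
    rw [mem_roots (hm2.ne_zero)] at hr
    have hev : r ^ 2 - r - ((k : ℕ) : ℚ) = 0 := by
      have := hr
      rw [IsRoot, hq₂] at this
      simpa using this
    have hsqr : (2 * r - 1) ^ 2 = ((4 * k + 1 : ℕ) : ℚ) := by push_cast; nlinarith [hev]
    have hirr := hp.irrational_sqrt
    apply hirr
    refine ⟨|2 * r - 1|, ?_⟩
    have h2 : (((2 * r - 1 : ℚ)) : ℝ) ^ 2 = ((4 * k + 1 : ℕ) : ℝ) := by exact_mod_cast congrArg (fun x : ℚ => (x : ℝ)) hsqr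
    rw [Rat.cast_abs]
    rw [show ((4 * k + 1 : ℕ) : ℝ) = (((2 * r - 1 : ℚ)) : ℝ) ^ 2 from h2.symm, Real.sqrt_sq_eq_abs]
  have hpr1 : Prime q₁ := hirr1.prime
  have hpr2 : Prime q₂ := hirr2.prime
  letI : GCDMonoid ℚ[X] := by infer_instance
  have hdvd2 : N.charpoly ∣ q₁ ^ (4 * k + 1) * q₂ ^ (4 * k + 1) := by
    rwa [← mul_pow]
  obtain ⟨d₁, d₂, hdd₁, hdd₂, hdeq⟩ := exists_dvd_and_dvd_of_dvd_mul hdvd2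
  obtain ⟨i, hi, ha₁⟩ := (dvd_prime_pow hpr1 _).mp hdd₁
  obtain ⟨j, hj, ha₂⟩ := (dvd_prime_pow hpr2 _).mp hdd₂
  have hassoc : Associated N.charpoly (q₁ ^ i * q₂ ^ j) := by
    rw [hdeq]; exact ha₁.mul_mul ha₂
  have hmon : (q₁ ^ i * q₂ ^ j).Monic := (hm1.pow i).mul (hm2.pow j)
  have hcp : N.charpoly = q₁ ^ i * q₂ ^ j :=
    eq_of_monic_of_associated (Matrix.charpoly_monic N) hmon hassoc
  -- degree equation
  have hdegeq : 4 * k + 1 = i + 2 * j := by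
    have h1 : N.charpoly.natDegree = 4 * k + 1 := by
      rw [Matrix.charpoly_natDegree_eq_dim, show Fintype.card F = 4 * k + 1 from ZMod.card _]
    rw [hcp, Polynomial.natDegree_mul (hm1.pow i).ne_zero (hm2.pow j).ne_zero,
      natDegree_pow, natDegree_pow, hd1, hd2] at h1
    omega
  -- trace equation
  have htr0 : N.trace = 0 := by
    simp [Matrix.trace, Matrix.diag, hNdef]
  have hcoeff : N.charpoly.coeff (4 * k) = 0 := by
    have h := Matrix.trace_eq_neg_charpoly_coeff N
    rw [htr0, show Fintype.card F = 4 * k + 1 from ZMod.card _] at h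
    have h' : N.charpoly.coeff (4 * k + 1 - 1) = 0 := by linarith [neg_eq_zero.mp h.symm]
    simpa using h'
  have hnd : N.charpoly.natDegree = 4 * k + 1 := by
    rw [Matrix.charpoly_natDegree_eq_dim, show Fintype.card F = 4 * k + 1 from ZMod.card _]
  have hnext : N.charpoly.nextCoeff = 0 := by
    rw [nextCoeff_of_natDegree_pos (by omega), hnd]
    simpa using hcoeff
  have hnext2 : (q₁ ^ i * q₂ ^ j).nextCoeff = (i : ℚ) * ((2 * k : ℕ) : ℚ) + (j : ℚ) * (-1) := by
    rw [Monic.nextCoeff_mul (hm1.pow i) (hm2.pow j), Monic.nextCoeff_pow hm1, Monic.nextCoeff_pow hm2]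
    have e3 : q₁.nextCoeff = ((2 * k : ℕ) : ℚ) := nextCoeff_X_add_C _
    have e4 : q₂.nextCoeff = -1 := by
      rw [nextCoeff_of_natDegree_pos (by rw [hd2]; norm_num), hd2]
      rw [hq₂]
      simp
    rw [e3, e4]
    push_cast
    ring
  have hji : j = 2 * k * i := by
    have h := hnext
    rw [hcp, hnext2] at h
    have : (j : ℚ) = (2 * k * i : ℕ) := by push_cast; push_cast at h; linarith
    exact_mod_cast this
  rw [hji] at hdegeq
  have h3 : i * (4 * k + 1) = 1 * (4 * k + 1) := by
    calc i * (4 * k + 1) = i + 2 * (2 * k * i) := by ring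
      _ = 4 * k + 1 := hdegeq.symm
      _ = 1 * (4 * k + 1) := by ring
  have hi1 : i = 1 := Nat.eq_of_mul_eq_mul_right (by omega) h3
  have hj2k : j = 2 * k := by rw [hji, hi1, mul_one]
  rw [hLHS, hcp, hi1, hj2k, pow_one]
end

section
/- Let n = 4k+1 be an odd prime and let A = circ(0, (1+χ(1))/2, ..., (1+χ(n-1))/2) where χ is the Legendre symbol modulo n. Then A^2 + A = k(I + J), where I is the identity matrix and J is the all-ones n×n matrix. -/
open Matrix Finset

section aux

variable (p : ℕ) [Fact p.Prime]

private lemma ring_char_ne_two (hp4 : p % 4 = 1) : ringChar (ZMod p) ≠ 2 := by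
  rw [ZMod.ringChar_zmod_n]; omega

private lemma chi_neg_one (hp4 : p % 4 = 1) : quadraticChar (ZMod p) (-1) = 1 := by
  rw [quadraticChar_neg_one (ring_char_ne_two p hp4), ZMod.card,
    ZMod.χ₄_nat_one_mod_four hp4]

/-- The quadratic character convolution sum for `s ≠ 0`. -/
private lemma conv_sum (hp4 : p % 4 = 1) {s : ZMod p} (hs : s ≠ 0) :
    ∑ d : ZMod p, quadraticChar (ZMod p) d * quadraticChar (ZMod p) (s - d) = -1 := by
  set χ := quadraticChar (ZMod p) with hχdef
  have hJ : jacobiSum χ χ = -χ (-1) := by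
    have := jacobiSum_nontrivial_inv (quadraticChar_ne_one (ring_char_ne_two p hp4))
    rwa [(quadraticChar_isQuadratic (ZMod p)).inv] at this
  have hre : ∑ d : ZMod p, χ d * χ (s - d) = ∑ x : ZMod p, χ (s * x) * χ (s - s * x) :=
    (Fintype.sum_equiv (Equiv.mulLeft₀ s hs) _ _ (fun x => rfl)).symm
  have hsq : χ s ^ 2 = 1 := quadraticChar_sq_one hs
  calc ∑ d : ZMod p, χ d * χ (s - d)
      = ∑ x : ZMod p, χ s ^ 2 * (χ x * χ (1 - x)) := by
        rw [hre]; refine Finset.sum_congr rfl fun x _ => ?_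
        have h1 : s - s * x = s * (1 - x) := by ring
        rw [h1, _root_.map_mul, _root_.map_mul]; ring
    _ = χ s ^ 2 * jacobiSum χ χ := by rw [← Finset.mul_sum]; rfl
    _ = -1 := by rw [hsq, hJ, chi_neg_one p hp4]; ring

/-- The entry function of the circulant, as a `ℚ`-valued function. -/
private def Fc (d : ZMod p) : ℚ :=
  if d = 0 then 0 else (1 + ((quadraticChar (ZMod p) d : ℤ) : ℚ)) / 2

private lemma key_scalar (k : ℕ) (hpk : p = 4 * k + 1) (s : ZMod p) :
    (∑ d : ZMod p, Fc p d * Fc p (s - d)) + Fc p s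
      = (k : ℚ) * ((if s = 0 then 1 else 0) + 1) := by
  have hp4 : p % 4 = 1 := by omega
  set c : ZMod p → ℚ := fun d => ((quadraticChar (ZMod p) d : ℤ) : ℚ) with hc
  have hc0 : c 0 = 0 := by simp [hc]
  have hcsq : ∀ d : ZMod p, d ≠ 0 → c d ^ 2 = 1 := by
    intro d hd
    have h := quadraticChar_sq_one hd (F := ZMod p)
    have h2 := congrArg (Int.cast : ℤ → ℚ) h
    push_cast at h2
    simpa [hc] using h2
  have hFc : ∀ d : ZMod p, Fc p d = (c d ^ 2 + c d) / 2 := by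
    intro d
    by_cases hd : d = 0
    · simp [Fc, hd, hc0]
    · simp only [Fc, hd, if_false, hcsq d hd]; rfl
  have hcsum : ∑ d : ZMod p, c d = 0 := by
    have h := quadraticChar_sum_zero (ring_char_ne_two p hp4) (F := ZMod p)
    have h2 := congrArg (Int.cast : ℤ → ℚ) h
    push_cast at h2
    simpa [hc] using h2
  have hcard : (Finset.univ : Finset (ZMod p)).card = p := by
    rw [Finset.card_univ, ZMod.card]
  have hsumsq : ∑ d : ZMod p, c d ^ 2 = (p : ℚ) - 1 := by
    have h1 : ∀ d : ZMod p, c d ^ 2 = 1 - (if d = 0 then 1 else 0) := by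
      intro d; by_cases hd : d = 0 <;> simp [hd, hc0, hcsq]
    rw [Finset.sum_congr rfl fun d _ => h1 d, Finset.sum_sub_distrib, Finset.sum_const,
      Finset.sum_ite_eq' Finset.univ (0 : ZMod p) (fun _ => (1 : ℚ))]
    simp [hcard]
  have hshift : ∀ t : ZMod p, ∑ d : ZMod p, c (t - d) = 0 := by
    intro t
    have := Fintype.sum_equiv (Equiv.subLeft t) (fun d => c (t - d)) c (fun x => rfl)
    rw [this, hcsum]
  by_cases hs : s = 0
  · subst hs
    have hFneg : ∀ d : ZMod p, Fc p (0 - d) = Fc p d := by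
      intro d
      by_cases hd : d = 0
      · simp [hd]
      · have hnd : -d ≠ 0 := neg_ne_zero.mpr hd
        have hcneg : c (-d) = c d := by
          have : c (-d) = c (-1) * c d := by
            simp only [hc]
            rw [show (-d : ZMod p) = -1 * d by ring, _root_.map_mul]
            push_cast; ring
          rw [this]
          have h1 : c (-1) = 1 := by
            show ((quadraticChar (ZMod p) (-1) : ℤ) : ℚ) = 1
            rw [chi_neg_one p hp4]; norm_num
          rw [h1, one_mul]
        simp only [zero_sub, Fc, hd, if_false, hnd]
        simp only [hc] at hcneg
        rw [show ((quadraticChar (ZMod p) (-d) : ℤ) : ℚ) = _ from hcneg]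
    have hFsq : ∀ d : ZMod p, Fc p d * Fc p d = Fc p d := by
      intro d
      by_cases hd : d = 0
      · simp [Fc, hd]
      · simp only [Fc, hd, if_false]
        have := hcsq d hd
        simp only [hc] at this
        linear_combination this / 4
    have hFsum : ∑ d : ZMod p, Fc p d = 2 * k := by
      rw [Finset.sum_congr rfl fun d _ => hFc d, ← Finset.sum_div, Finset.sum_add_distrib,
        hsumsq, hcsum, hpk]
      push_cast; ring
    calc (∑ d : ZMod p, Fc p d * Fc p (0 - d)) + Fc p 0
        = ∑ d : ZMod p, Fc p d := by
          rw [Finset.sum_congr rfl fun d _ => by rw [hFneg d, hFsq d]]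
          simp [Fc]; rfl
      _ = (k : ℚ) * ((if (0 : ZMod p) = 0 then 1 else 0) + 1) := by
          rw [hFsum]; simp; ring
  · -- s ≠ 0
    have hT1 : ∑ d : ZMod p, c d ^ 2 * c (s - d) ^ 2 = (p : ℚ) - 2 := by
      have h1 : ∀ d : ZMod p, c d ^ 2 * c (s - d) ^ 2
          = 1 - (if d = 0 then 1 else 0) - (if d = s then 1 else 0) := by
        intro d
        by_cases hd : d = 0
        · subst hd; simp [hc0, Ne.symm hs]
        · by_cases hds : d = s
          · subst hds; simp [hd, hc0, hcsq d hd]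
          · have h2 : s - d ≠ 0 := sub_ne_zero.mpr (Ne.symm hds)
            simp [hd, hds, hcsq d hd, hcsq _ h2]
      rw [Finset.sum_congr rfl fun d _ => h1 d]
      rw [Finset.sum_sub_distrib, Finset.sum_sub_distrib, Finset.sum_const,
        Finset.sum_ite_eq' Finset.univ (0 : ZMod p) (fun _ => (1 : ℚ)),
        Finset.sum_ite_eq' Finset.univ s (fun _ => (1 : ℚ))]
      simp [hcard]; ring
    have hT2 : ∑ d : ZMod p, c d ^ 2 * c (s - d) = -(c s) := by
      have h1 : ∀ d : ZMod p, c d ^ 2 * c (s - d)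
          = c (s - d) - (if d = 0 then c (s - d) else 0) := by
        intro d; by_cases hd : d = 0 <;> simp [hd, hc0, hcsq]
      rw [Finset.sum_congr rfl fun d _ => h1 d, Finset.sum_sub_distrib, hshift,
        Finset.sum_ite_eq' Finset.univ (0 : ZMod p) (fun d => c (s - d))]
      simp
    have hT3 : ∑ d : ZMod p, c d * c (s - d) ^ 2 = -(c s) := by
      have h1 : ∀ d : ZMod p, c d * c (s - d) ^ 2
          = c d - (if d = s then c d else 0) := by
        intro d
        by_cases hds : d = s
        · subst hds; simp [hc0]
        · have h2 : s - d ≠ 0 := sub_ne_zero.mpr (Ne.symm hds)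
          simp [hds, hcsq _ h2]
      rw [Finset.sum_congr rfl fun d _ => h1 d, Finset.sum_sub_distrib, hcsum,
        Finset.sum_ite_eq' Finset.univ s (fun d => c d)]
      simp
    have hT4 : ∑ d : ZMod p, c d * c (s - d) = -1 := by
      have h := conv_sum p hp4 hs
      have h2 := congrArg (Int.cast : ℤ → ℚ) h
      push_cast at h2
      simpa [hc] using h2
    have hexp : ∑ d : ZMod p, Fc p d * Fc p (s - d)
        = ((∑ d : ZMod p, c d ^ 2 * c (s - d) ^ 2) + (∑ d : ZMod p, c d ^ 2 * c (s - d))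
          + (∑ d : ZMod p, c d * c (s - d) ^ 2) + (∑ d : ZMod p, c d * c (s - d))) / 4 := by
      rw [← Finset.sum_add_distrib, ← Finset.sum_add_distrib, ← Finset.sum_add_distrib,
        Finset.sum_div]
      refine Finset.sum_congr rfl fun d _ => ?_
      rw [hFc d, hFc (s - d)]; ring
    have hFs : Fc p s = (1 + c s) / 2 := by simp [Fc, hs, hc]
    rw [hexp, hT1, hT2, hT3, hT4, hFs, if_neg hs, hpk]
    push_cast; ring

end aux

/-- For `n = 4k+1` an odd prime and `χ` the Legendre symbol mod `n`, the circulant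
`A = circ(0, (1+χ(1))/2, ..., (1+χ(n-1))/2)` satisfies `A² + A = k(I + J)`,
where `J` is the all-ones matrix. -/
theorem legendre_circulant_sq (k : ℕ) (hk : 0 < k) (hp : (4 * k + 1).Prime) :
    letI A : Matrix (ZMod (4 * k + 1)) (ZMod (4 * k + 1)) ℚ :=
      Matrix.of fun p q =>
        (fun m : ZMod (4 * k + 1) =>
            if m = 0 then (0 : ℚ)
            else (1 + (@legendreSym (4 * k + 1) ⟨hp⟩ m.val : ℚ)) / 2) (q - p)
    A ^ 2 + A = (k : ℚ) • ((1 : Matrix (ZMod (4 * k + 1)) (ZMod (4 * k + 1)) ℚ)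
      + Matrix.of fun _ _ => (1 : ℚ)) := by
  haveI : Fact (4 * k + 1).Prime := ⟨hp⟩
  have hAF : ∀ m : ZMod (4 * k + 1),
      (if m = 0 then (0 : ℚ) else (1 + (@legendreSym (4 * k + 1) ⟨hp⟩ m.val : ℚ)) / 2)
        = Fc (4 * k + 1) m := by
    intro m
    simp only [Fc, legendreSym, ZMod.natCast_val, ZMod.intCast_zmod_cast]
  ext p q
  have hre : ∑ m : ZMod (4 * k + 1), Fc (4 * k + 1) (m - p) * Fc (4 * k + 1) (q - m)
      = ∑ d : ZMod (4 * k + 1), Fc (4 * k + 1) d * Fc (4 * k + 1) ((q - p) - d) :=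
    Fintype.sum_equiv (Equiv.subRight p) _ _
      (fun m => by rw [show q - m = (q - p) - (m - p) by ring]; rfl)
  have hkey := key_scalar (4 * k + 1) k rfl (q - p)
  have hLHS : ∀ B : Matrix (ZMod (4 * k + 1)) (ZMod (4 * k + 1)) ℚ,
      B = Matrix.of (fun p q =>
          (fun m : ZMod (4 * k + 1) =>
            if m = 0 then (0 : ℚ)
            else (1 + (@legendreSym (4 * k + 1) ⟨hp⟩ m.val : ℚ)) / 2) (q - p)) →
      (B ^ 2 + B) p q
        = (∑ d : ZMod (4 * k + 1), Fc (4 * k + 1) d * Fc (4 * k + 1) ((q - p) - d))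
            + Fc (4 * k + 1) (q - p) := by
    intro B hB
    subst hB
    simp only [Matrix.add_apply, pow_two, Matrix.mul_apply, Matrix.of_apply]
    rw [Finset.sum_congr rfl fun m _ => by rw [hAF (m - p), hAF (q - m)], hre, hAF]
  rw [hLHS _ rfl, hkey]
  simp only [Matrix.smul_apply, Matrix.add_apply, Matrix.one_apply, Matrix.of_apply,
    smul_eq_mul]
  have hiff : (q - p = 0) ↔ (p = q) := by rw [sub_eq_zero, eq_comm]
  by_cases hpq : p = q <;> simp [hpq, hiff]
end
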